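/- Let N ≥ 3, set k+1 = N−2, and let a_1,…,a_N ∈ ℤ^{k+1} generate ℤ^{k+1} as an abelian group. Let L = {ℓ ∈ ℤ^N : Σ ℓ_i·a_i = 0}, assume that for every i there exists ℓ ∈ L with ℓ_i ≠ 0, and let B be a 2×N integer matrix whose rows form a ℤ-basis of L, with columns b_1,…,b_N. Then: (a) for every i, the linear relation Σ_{j=1}^N det(b_i,b_j)·a_j = 0 is a minimal linear dependence relation among a_1,…,a_N; and (b) every minimal linear dependence relation Σ_{j=1}^N α_j·a_j = 0 (with α ∈ ℚ^N not all zero) is a nonzero rational scalar multiple of the relation Σ_{j=1}^N det(b_i,b_j)·a_j = 0 for some i. -/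

import Mathlib

/-- The subsequence of the family `v` indexed by `S` is minimally dependent:
it is linearly dependent over `ℚ`, but every proper subsequence is linearly
independent over `ℚ`. -/
def MinimallyDependent {n m : ℕ} (v : Fin n → (Fin m → ℚ)) (S : Set (Fin n)) : Prop :=
  (¬ LinearIndependent ℚ (fun j : S => v j.1)) ∧
  ∀ T : Set (Fin n), T ⊂ S → LinearIndependent ℚ (fun j : T => v j.1)

/-- Members of the closure of the set of rows of `B` are integer combinations of rows. -/
lemma stmt9_memPair {N : ℕ} (B : Matrix (Fin 2) (Fin N) ℤ) (ℓ : Fin N → ℤ)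
    (h : ℓ ∈ AddSubgroup.closure (Set.range fun r : Fin 2 => (fun j => B r j))) :
    ∃ s t : ℤ, ∀ j, ℓ j = s * B 0 j + t * B 1 j := by
  induction h using AddSubgroup.closure_induction with
  | mem x hx =>
      obtain ⟨r, rfl⟩ := hx
      fin_cases r
      · exact ⟨1, 0, fun j => by show B 0 j = 1 * B 0 j + 0 * B 1 j; ring⟩
      · exact ⟨0, 1, fun j => by show B 1 j = 0 * B 0 j + 1 * B 1 j; ring⟩
  | zero => exact ⟨0, 0, fun j => by simp⟩
  | add x y hx hy ihx ihy =>
      obtain ⟨s1, t1, h1⟩ := ihx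
      obtain ⟨s2, t2, h2⟩ := ihy
      exact ⟨s1 + s2, t1 + t2, fun j => by
        simp only [Pi.add_apply, h1 j, h2 j]; ring⟩
  | neg x hx ihx =>
      obtain ⟨s1, t1, h1⟩ := ihx
      exact ⟨-s1, -t1, fun j => by simp only [Pi.neg_apply, h1 j]; ring⟩

/-- Clearing denominators of a finite family of rationals. -/
lemma stmt9_clear {N : ℕ} (α : Fin N → ℚ) :
    ∃ (m : ℤ) (ℓ : Fin N → ℤ), m ≠ 0 ∧ ∀ j, (ℓ j : ℚ) = m * α j := by
  refine ⟨(∏ j, ((α j).den : ℤ)),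
    fun j => (∏ k ∈ Finset.univ.erase j, ((α k).den : ℤ)) * (α j).num, ?_, ?_⟩
  · refine Finset.prod_ne_zero_iff.mpr fun j _ => ?_
    exact_mod_cast (α j).den_nz
  · intro j
    have hsplit : (∏ k, ((α k).den : ℤ))
        = ((α j).den : ℤ) * ∏ k ∈ Finset.univ.erase j, ((α k).den : ℤ) :=
      (Finset.mul_prod_erase _ _ (Finset.mem_univ j)).symm
    have hden : ((α j).den : ℚ) * α j = ((α j).num : ℚ) := by
      rw [mul_comm]; exact_mod_cast Rat.mul_den_eq_num (α j)
    rw [hsplit]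
    push_cast
    rw [← hden]
    ring

theorem stmt9 (N : ℕ) (hN : 3 ≤ N) (a : Fin N → Fin (N - 2) → ℤ)
    (hgen : AddSubgroup.closure (Set.range a) = ⊤)
    (hcoord : ∀ i, ∃ ℓ : Fin N → ℤ, (∑ j, ℓ j • a j = 0) ∧ ℓ i ≠ 0)
    (B : Matrix (Fin 2) (Fin N) ℤ)
    (hrowsRel : ∀ r : Fin 2, ∑ j, B r j • a j = 0)
    (hrowsInd : LinearIndependent ℤ (fun r : Fin 2 => (fun j => B r j)))
    (hrowsSpan : ∀ ℓ : Fin N → ℤ, (∑ j, ℓ j • a j = 0) →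
      ℓ ∈ AddSubgroup.closure (Set.range fun r : Fin 2 => (fun j => B r j))) :
    (∀ i : Fin N,
      (∑ j, ((B 0 i * B 1 j - B 0 j * B 1 i : ℤ) : ℚ) • (fun t => (a j t : ℚ)) =
        (0 : Fin (N - 2) → ℚ)) ∧
      MinimallyDependent (fun j t => (a j t : ℚ))
        {j | B 0 i * B 1 j - B 0 j * B 1 i ≠ 0}) ∧
    (∀ α : Fin N → ℚ, α ≠ 0 →
      (∑ j, α j • (fun t => (a j t : ℚ))) = (0 : Fin (N - 2) → ℚ) →
      MinimallyDependent (fun j t => (a j t : ℚ)) {j | α j ≠ 0} →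
      ∃ i : Fin N, ∃ c : ℚ, c ≠ 0 ∧
        α = fun j => c * ((B 0 i * B 1 j - B 0 j * B 1 i : ℤ) : ℚ)) := by
  classical
  -- componentwise reformulation of being a rational relation
  have hsum : ∀ (α : Fin N → ℚ),
      (∑ j, α j • (fun t => (a j t : ℚ))) = (0 : Fin (N - 2) → ℚ) ↔
      ∀ t, ∑ j, α j * (a j t : ℚ) = 0 := by
    intro α
    constructor
    · intro h t
      have := congrFun h t
      simpa [Finset.sum_apply] using this
    · intro h
      funext t
      simpa [Finset.sum_apply] using h t
  -- rows are rational relations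
  have hrowsRelQ : ∀ r : Fin 2, ∀ t, ∑ j, (B r j : ℚ) * (a j t : ℚ) = 0 := by
    intro r t
    have h1 := congrFun (hrowsRel r) t
    have h2 : (∑ j, B r j * a j t) = 0 := by simpa [Finset.sum_apply] using h1
    exact_mod_cast h2
  -- every rational relation is a rational combination of the rows
  have hspanQ : ∀ α : Fin N → ℚ, (∀ t, ∑ j, α j * (a j t : ℚ) = 0) →
      ∃ x y : ℚ, ∀ j, α j = x * (B 0 j : ℚ) + y * (B 1 j : ℚ) := by
    intro α hα
    obtain ⟨m, ℓ, hm, hℓ⟩ := stmt9_clear α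
    have hmQ : (m : ℚ) ≠ 0 := Int.cast_ne_zero.mpr hm
    have hrel : ∑ j, ℓ j • a j = 0 := by
      funext t
      have hq : ((∑ j, ℓ j * a j t : ℤ) : ℚ) = 0 := by
        push_cast
        calc ∑ j, (ℓ j : ℚ) * (a j t : ℚ)
            = ∑ j, (m : ℚ) * (α j * (a j t : ℚ)) := by
              refine Finset.sum_congr rfl fun j _ => ?_
              rw [hℓ j]; ring
          _ = (m : ℚ) * ∑ j, α j * (a j t : ℚ) := by rw [Finset.mul_sum]
          _ = 0 := by rw [hα t]; ring
      have h0 : (∑ j, ℓ j * a j t) = 0 := by exact_mod_cast hq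
      simpa [Finset.sum_apply] using h0
    obtain ⟨s, t0, hst⟩ := stmt9_memPair B ℓ (hrowsSpan ℓ hrel)
    refine ⟨(s : ℚ) / m, (t0 : ℚ) / m, fun j => ?_⟩
    have key : (m : ℚ) * α j = (s : ℚ) * B 0 j + (t0 : ℚ) * B 1 j := by
      rw [← hℓ j]; exact_mod_cast hst j
    field_simp
    linear_combination key
  -- columns are nonzero
  have hcol : ∀ i, ¬(B 0 i = 0 ∧ B 1 i = 0) := by
    rintro i ⟨h0, h1⟩
    obtain ⟨ℓ, hrel, hℓi⟩ := hcoord i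
    obtain ⟨s, t, hst⟩ := stmt9_memPair B ℓ (hrowsSpan ℓ hrel)
    apply hℓi
    rw [hst i, h0, h1]; ring
  -- each determinant relation has nonempty support
  have hSne : ∀ i, ∃ j, B 0 i * B 1 j - B 0 j * B 1 i ≠ 0 := by
    intro i
    by_contra h
    push_neg at h
    have hz : ∑ r, (![-B 1 i, B 0 i] : Fin 2 → ℤ) r • (fun j => B r j) = 0 := by
      funext j
      have := h j
      simp [Fin.sum_univ_two]
      linear_combination this
    have h0 := Fintype.linearIndependent_iff.mp hrowsInd _ hz 0
    have h1 := Fintype.linearIndependent_iff.mp hrowsInd _ hz 1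
    simp at h0 h1
    exact hcol i ⟨h1, h0⟩
  -- determinant relations are relations
  have hdrel : ∀ i : Fin N, ∀ t,
      ∑ j, ((B 0 i * B 1 j - B 0 j * B 1 i : ℤ) : ℚ) * (a j t : ℚ) = 0 := by
    intro i t
    have h0 := hrowsRelQ 0 t
    have h1 := hrowsRelQ 1 t
    calc ∑ j, ((B 0 i * B 1 j - B 0 j * B 1 i : ℤ) : ℚ) * (a j t : ℚ)
        = (B 0 i : ℚ) * ∑ j, (B 1 j : ℚ) * (a j t : ℚ)
            - (B 1 i : ℚ) * ∑ j, (B 0 j : ℚ) * (a j t : ℚ) := by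
          rw [Finset.mul_sum, Finset.mul_sum, ← Finset.sum_sub_distrib]
          refine Finset.sum_congr rfl fun j _ => ?_
          push_cast; ring
      _ = 0 := by rw [h0, h1]; ring
  -- key lemma: a rational relation vanishing at i is a multiple of the i-th det relation
  have hD : ∀ (i : Fin N) (α : Fin N → ℚ), (∀ t, ∑ j, α j * (a j t : ℚ) = 0) →
      α i = 0 → ∃ c : ℚ, ∀ j, α j = c * ((B 0 i * B 1 j - B 0 j * B 1 i : ℤ) : ℚ) := by
    intro i α hα hαi
    obtain ⟨x, y, hxy⟩ := hspanQ α hα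
    have hi : x * (B 0 i : ℚ) + y * (B 1 i : ℚ) = 0 := by rw [← hxy i]; exact hαi
    by_cases h0 : (B 0 i : ℚ) = 0
    · have hB0 : B 0 i = 0 := by exact_mod_cast h0
      have hB1 : B 1 i ≠ 0 := fun h => hcol i ⟨hB0, h⟩
      have hB1Q : (B 1 i : ℚ) ≠ 0 := Int.cast_ne_zero.mpr hB1
      refine ⟨-x / (B 1 i : ℚ), fun j => ?_⟩
      rw [hxy j]
      push_cast
      field_simp
      linear_combination (B 1 j : ℚ) * hi
    · refine ⟨y / (B 0 i : ℚ), fun j => ?_⟩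
      rw [hxy j]
      push_cast
      field_simp
      linear_combination (B 0 j : ℚ) * hi
  constructor
  · -- part (a)
    intro i
    have hrel_i := hdrel i
    constructor
    · exact (hsum _).mpr hrel_i
    · constructor
      · -- dependence on the support
        intro hLI
        obtain ⟨j0, hj0⟩ := hSne i
        set S : Set (Fin N) := {j | B 0 i * B 1 j - B 0 j * B 1 i ≠ 0} with hSdef
        have h0 : ∑ j : S, ((B 0 i * B 1 j.1 - B 0 j.1 * B 1 i : ℤ) : ℚ) •
            (fun t => (a j.1 t : ℚ)) = 0 := by
          funext t
          rw [Finset.sum_apply]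
          have e1 : ∑ j : S, ((B 0 i * B 1 j.1 - B 0 j.1 * B 1 i : ℤ) : ℚ) * (a j.1 t : ℚ)
              = ∑ j ∈ Finset.univ.filter (fun j => j ∈ S),
                  ((B 0 i * B 1 j - B 0 j * B 1 i : ℤ) : ℚ) * (a j t : ℚ) := by
            exact (Finset.sum_subtype (Finset.univ.filter (fun j => j ∈ S))
              (fun x => by simp)
              (fun j => ((B 0 i * B 1 j - B 0 j * B 1 i : ℤ) : ℚ) * (a j t : ℚ))).symm
          have e2 : ∑ j ∈ Finset.univ.filter (fun j => j ∈ S),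
              ((B 0 i * B 1 j - B 0 j * B 1 i : ℤ) : ℚ) * (a j t : ℚ)
              = ∑ j, ((B 0 i * B 1 j - B 0 j * B 1 i : ℤ) : ℚ) * (a j t : ℚ) := by
            refine Finset.sum_filter_of_ne fun x _ hx => ?_
            exact Int.cast_ne_zero.mp (left_ne_zero_of_mul hx)
          simp only [Pi.smul_apply, smul_eq_mul, Pi.zero_apply]
          rw [e1, e2, hrel_i t]
        have := Fintype.linearIndependent_iff.mp hLI _ h0 ⟨j0, hj0⟩
        exact hj0 (by exact_mod_cast this)
      · -- proper subsets are independent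
        intro T hT
        rw [Fintype.linearIndependent_iff]
        intro g hg
        set αe : Fin N → ℚ := fun j => if h : j ∈ T then g ⟨j, h⟩ else 0 with hαe
        have hrelα : ∀ t, ∑ j, αe j * (a j t : ℚ) = 0 := by
          intro t
          have hgt := congrFun hg t
          simp only [Finset.sum_apply, Pi.smul_apply, smul_eq_mul, Pi.zero_apply] at hgt
          have e2 : ∑ j ∈ Finset.univ.filter (fun j => j ∈ T), αe j * (a j t : ℚ)
              = ∑ j, αe j * (a j t : ℚ) := by
            refine Finset.sum_filter_of_ne fun x _ hx => ?_
            by_contra hxT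
            exact hx (by rw [hαe]; simp [dif_neg hxT])
          have e1 : ∑ j ∈ Finset.univ.filter (fun j => j ∈ T), αe j * (a j t : ℚ)
              = ∑ j : T, αe j.1 * (a j.1 t : ℚ) :=
            Finset.sum_subtype _ (fun x => by simp) _
          have e3 : ∑ j : T, αe j.1 * (a j.1 t : ℚ) = ∑ j : T, g j * (a j.1 t : ℚ) := by
            refine Finset.sum_congr rfl fun j _ => ?_
            rw [hαe]; simp [dif_pos j.2]
          rw [← e2, e1, e3, hgt]
        have hiS : B 0 i * B 1 i - B 0 i * B 1 i = 0 := by ring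
        have hinT : i ∉ T := by
          intro hiT
          have := hT.1 hiT
          simp only [Set.mem_setOf_eq] at this
          exact this (by ring)
        have hαei : αe i = 0 := dif_neg hinT
        obtain ⟨c, hc⟩ := hD i αe hrelα hαei
        obtain ⟨j1, hj1S, hj1T⟩ := Set.exists_of_ssubset hT
        have hc0 : c = 0 := by
          have h1 : αe j1 = 0 := dif_neg hj1T
          have h2 := hc j1
          rw [h1] at h2
          have hd1 : ((B 0 i * B 1 j1 - B 0 j1 * B 1 i : ℤ) : ℚ) ≠ 0 :=
            Int.cast_ne_zero.mpr hj1S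
          exact (mul_eq_zero.mp h2.symm).resolve_right hd1
        intro j
        have := hc j.1
        rw [hc0, zero_mul] at this
        rw [hαe] at this
        simpa [dif_pos j.2] using this
  · -- part (b)
    intro α hα0 hαrel hmin
    have hrelc : ∀ t, ∑ j, α j * (a j t : ℚ) = 0 := (hsum α).mp hαrel
    have hex : ∃ i, α i = 0 := by
      by_contra h
      push_neg at h
      have hS : {j | α j ≠ 0} = Set.univ := Set.eq_univ_of_forall h
      have hNpos : 0 < N := by omega
      set j0 : Fin N := ⟨0, hNpos⟩ with hj0
      have hTsub : {j : Fin N | j ≠ j0} ⊂ {j | α j ≠ 0} := by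
        rw [hS]
        rw [Set.ssubset_univ_iff]
        intro hcon
        have : j0 ∈ {j : Fin N | j ≠ j0} := hcon ▸ Set.mem_univ j0
        exact this rfl
      have hli := hmin.2 _ hTsub
      have hcard := hli.fintype_card_le_finrank
      have hrank : Module.finrank ℚ (Fin (N - 2) → ℚ) = N - 2 := by
        simp [Module.finrank_pi]
      have hcardT : Fintype.card {j : Fin N // j ∈ {j : Fin N | j ≠ j0}} = N - 1 := by
        have : Fintype.card {j : Fin N // j ∈ {j : Fin N | j ≠ j0}}
            = Fintype.card {j : Fin N // ¬ (j = j0)} :=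
          Fintype.card_congr (Equiv.subtypeEquivRight (fun _ => Iff.rfl))
        rw [this, Fintype.card_subtype_compl, Fintype.card_subtype_eq, Fintype.card_fin]
      rw [hrank, hcardT] at hcard
      omega
    obtain ⟨i, hi⟩ := hex
    obtain ⟨c, hc⟩ := hD i α hrelc hi
    have hcne : c ≠ 0 := by
      intro h
      apply hα0
      funext j
      rw [hc j, h, zero_mul]; rfl
    exact ⟨i, c, hcne, funext hc⟩
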